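/- arXiv:2201.04181 — 2 statements merged into one kernel-verified Lean document; each statement's English description precedes it below -/
import Mathlib

section
/- For 0 ≤ a ≤ d ≤ k < n, the conditional probability satisfies f(n,k,d) = f(n-a, k-a, d-a). -/
/-- `c n k d` : number of permutations of `{1,...,n}` (modeled as `Fin n`)
with exactly `d` fixed points among the first `k` points. -/
noncomputable def c (n k d : ℕ) : ℕ :=
  Nat.card {α : Equiv.Perm (Fin n) //
    (Finset.univ.filter (fun i : Fin n => (i : ℕ) < k ∧ α i = i)).card = d}

/-- `p n k d = c n k d / n!`, the probability that a uniformly random permutation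
of `[n]` has exactly `d` fixed points among the first `k` points. -/
noncomputable def p (n k d : ℕ) : ℝ := (c n k d : ℝ) / (Nat.factorial n)

/-- `f n k d = c (n-1) k d / c n k d`, the conditional probability that the
`(k+1)`-st point is fixed given exactly `d` fixed points among the first `k` points. -/
noncomputable def f (n k d : ℕ) : ℝ := (c (n - 1) k d : ℝ) / (c n k d)

open Finset Equiv

/-- number of fixed points among the first `k` points -/
def cnt (n k : ℕ) (α : Equiv.Perm (Fin n)) : ℕ :=
  (Finset.univ.filter (fun i : Fin n => (i : ℕ) < k ∧ α i = i)).card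

lemma c_eq (n k d : ℕ) :
    c n k d = (Finset.univ.filter (fun α : Equiv.Perm (Fin n) => cnt n k α = d)).card := by
  rw [c, Nat.card_eq_fintype_card, Fintype.card_subtype]
  rfl

lemma cnt_conj (m k : ℕ) (s α : Equiv.Perm (Fin m))
    (hs : ∀ j : Fin m, ((s j : ℕ) < k ↔ (j : ℕ) < k)) (hss : s * s = 1) :
    cnt m k (s * α * s) = cnt m k α := by
  have hinv : ∀ x, s (s x) = x := by
    intro x
    have := congrArg (fun g : Equiv.Perm (Fin m) => g x) hss
    simpa using this
  unfold cnt
  apply Finset.card_bij' (fun j _ => s j) (fun j _ => s j)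
  · intro j hj
    rw [Finset.mem_filter] at hj ⊢
    simp only [Finset.mem_filter, Finset.mem_univ, true_and, Equiv.Perm.mul_apply] at hj ⊢
    refine ⟨(hs j).2 hj.1, ?_⟩
    have := congrArg s hj.2
    rwa [hinv] at this
  · intro j hj
    rw [Finset.mem_filter] at hj ⊢
    simp only [Finset.mem_filter, Finset.mem_univ, true_and, Equiv.Perm.mul_apply] at hj ⊢
    refine ⟨(hs j).2 hj.1, ?_⟩
    rw [hinv, hj.2]
  · intro j _; exact hinv j
  · intro j _; exact hinv j

lemma fix_card_eq (m k d : ℕ) (i : Fin (m + 1)) (hi : (i : ℕ) < k) :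
    (Finset.univ.filter
      (fun α : Equiv.Perm (Fin (m + 1)) => α i = i ∧ cnt (m + 1) k α = d)).card =
    (Finset.univ.filter
      (fun α : Equiv.Perm (Fin (m + 1)) => α 0 = 0 ∧ cnt (m + 1) k α = d)).card := by
  set s : Equiv.Perm (Fin (m + 1)) := Equiv.swap 0 i with hsdef
  have h0 : (0 : ℕ) < k := Nat.lt_of_le_of_lt (Nat.zero_le _) hi
  have hs : ∀ j : Fin (m + 1), ((s j : ℕ) < k ↔ (j : ℕ) < k) := by
    intro j
    rcases eq_or_ne j 0 with rfl | hj0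
    · simp [hsdef, Equiv.swap_apply_left, hi, h0]
    · rcases eq_or_ne j i with rfl | hji
      · simp [hsdef, Equiv.swap_apply_right, hi, h0]
      · rw [hsdef, Equiv.swap_apply_of_ne_of_ne hj0 hji]
  have hss : s * s = 1 := Equiv.swap_mul_self 0 i
  have hinv : ∀ x, s (s x) = x := by
    intro x
    have := congrArg (fun g : Equiv.Perm (Fin (m + 1)) => g x) hss
    simpa using this
  apply Finset.card_bij' (fun α _ => s * α * s) (fun α _ => s * α * s)
  · intro α hα
    simp only [Finset.mem_filter, Finset.mem_univ, true_and] at hα ⊢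
    constructor
    · show s (α (s 0)) = 0
      rw [hsdef, Equiv.swap_apply_left]
      rw [show α i = i from hα.1]
      exact Equiv.swap_apply_right 0 i
    · rw [cnt_conj (m + 1) k s α hs hss]; exact hα.2
  · intro α hα
    simp only [Finset.mem_filter, Finset.mem_univ, true_and] at hα ⊢
    constructor
    · show s (α (s i)) = i
      rw [hsdef, Equiv.swap_apply_right]
      rw [show α 0 = 0 from hα.1]
      exact Equiv.swap_apply_left 0 i
    · rw [cnt_conj (m + 1) k s α hs hss]; exact hα.2
  · intro α _
    ext x
    simp [Equiv.Perm.mul_apply, hinv]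
  · intro α _
    ext x
    simp [Equiv.Perm.mul_apply, hinv]

lemma cnt_succ (m k : ℕ) (β : Equiv.Perm (Fin m)) :
    cnt (m + 1) (k + 1) (Equiv.Perm.decomposeFin.symm (0, β)) = cnt m k β + 1 := by
  unfold cnt
  rw [Finset.card_filter, Finset.card_filter, Fin.sum_univ_succ]
  have h0 : (if ((0 : Fin (m+1)) : ℕ) < k + 1 ∧
      (Equiv.Perm.decomposeFin.symm (0, β)) 0 = 0 then 1 else 0) = 1 := by
    simp [Equiv.Perm.decomposeFin_symm_apply_zero]
  rw [h0]
  rw [Nat.add_comm]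
  congr 1
  apply Finset.sum_congr rfl
  intro j _
  have hsucc : (Equiv.Perm.decomposeFin.symm (0, β)) j.succ = (β j).succ := by
    rw [Equiv.Perm.decomposeFin_symm_apply_succ]
    simp
  congr 1
  simp only [hsucc, Fin.val_succ, Fin.succ_inj, eq_iff_iff]
  constructor
  · rintro ⟨h1, h2⟩; exact ⟨Nat.lt_of_succ_lt_succ h1, h2⟩
  · rintro ⟨h1, h2⟩; exact ⟨Nat.succ_lt_succ h1, h2⟩

lemma c_fix_zero (m k d : ℕ) :
    (Finset.univ.filter
      (fun α : Equiv.Perm (Fin (m + 1)) => α 0 = 0 ∧ cnt (m + 1) (k + 1) α = d + 1)).card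
    = c m k d := by
  rw [c_eq]
  symm
  apply Finset.card_bij' (fun β _ => Equiv.Perm.decomposeFin.symm (0, β))
    (fun α _ => (Equiv.Perm.decomposeFin α).2)
  · intro β hβ
    simp only [Finset.mem_filter, Finset.mem_univ, true_and] at hβ ⊢
    refine ⟨Equiv.Perm.decomposeFin_symm_apply_zero 0 β, ?_⟩
    rw [cnt_succ, hβ]
  · intro α hα
    simp only [Finset.mem_filter, Finset.mem_univ, true_and] at hα ⊢
    have hfst : (Equiv.Perm.decomposeFin α).1 = 0 := by
      have h1 : Equiv.Perm.decomposeFin.symm (Equiv.Perm.decomposeFin α) = α :=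
        Equiv.symm_apply_apply _ _
      have h2 := Equiv.Perm.decomposeFin_symm_apply_zero
        (Equiv.Perm.decomposeFin α).1 (Equiv.Perm.decomposeFin α).2
      rw [Prod.mk.eta, h1] at h2
      rw [← h2]; exact hα.1
    have hback : Equiv.Perm.decomposeFin.symm (0, (Equiv.Perm.decomposeFin α).2) = α := by
      rw [← hfst, Prod.mk.eta]
      exact Equiv.symm_apply_apply _ _
    have := cnt_succ m k (Equiv.Perm.decomposeFin α).2
    rw [hback, hα.2] at this
    omega
  · intro β _
    exact congrArg Prod.snd (Equiv.apply_symm_apply Equiv.Perm.decomposeFin (0, β))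
  · intro α hα
    simp only [Finset.mem_filter, Finset.mem_univ, true_and] at hα
    have hfst : (Equiv.Perm.decomposeFin α).1 = 0 := by
      have h1 : Equiv.Perm.decomposeFin.symm (Equiv.Perm.decomposeFin α) = α :=
        Equiv.symm_apply_apply _ _
      have h2 := Equiv.Perm.decomposeFin_symm_apply_zero
        (Equiv.Perm.decomposeFin α).1 (Equiv.Perm.decomposeFin α).2
      rw [Prod.mk.eta, h1] at h2
      rw [← h2]; exact hα.1
    rw [← hfst, Prod.mk.eta]
    exact Equiv.symm_apply_apply _ _

lemma card_lt_fin (N t : ℕ) (h : t ≤ N) :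
    (Finset.univ.filter (fun i : Fin N => (i : ℕ) < t)).card = t := by
  have : (Finset.univ.filter (fun i : Fin N => (i : ℕ) < t)) =
      (Finset.range t).attachFin (fun m hm => Nat.lt_of_lt_of_le (Finset.mem_range.mp hm) h) := by
    ext i
    simp [Finset.mem_attachFin]
  rw [this, Finset.card_attachFin, Finset.card_range]

lemma key (m k d : ℕ) (hk : k ≤ m) :
    (d + 1) * c (m + 1) (k + 1) (d + 1) = (k + 1) * c m k d := by
  classical
  set P : Equiv.Perm (Fin (m + 1)) → Fin (m + 1) → Prop :=
    fun α i => ((i : ℕ) < k + 1 ∧ α i = i) ∧ cnt (m + 1) (k + 1) α = d + 1 with hP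
  have h1 : ∑ α : Equiv.Perm (Fin (m + 1)), ∑ i : Fin (m + 1), (if P α i then 1 else 0)
      = (d + 1) * c (m + 1) (k + 1) (d + 1) := by
    rw [c_eq]
    have : ∀ α : Equiv.Perm (Fin (m + 1)),
        ∑ i : Fin (m + 1), (if P α i then 1 else 0)
        = if cnt (m + 1) (k + 1) α = d + 1 then d + 1 else 0 := by
      intro α
      by_cases h : cnt (m + 1) (k + 1) α = d + 1
      · rw [if_pos h]
        have : ∀ i : Fin (m + 1), (if P α i then 1 else 0)
            = if (i : ℕ) < k + 1 ∧ α i = i then 1 else 0 := by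
          intro i; simp [hP, h]
        rw [Finset.sum_congr rfl (fun i _ => this i), ← Finset.card_filter]
        exact h
      · have : ∀ i : Fin (m + 1), (if P α i then 1 else 0) = 0 := by
          intro i; simp [hP, h]
        rw [Finset.sum_congr rfl (fun i _ => this i), if_neg h]
        simp
    rw [Finset.sum_congr rfl (fun α _ => this α)]
    rw [← Finset.sum_filter, Finset.sum_const, smul_eq_mul, Nat.mul_comm]
  have h2 : ∑ α : Equiv.Perm (Fin (m + 1)), ∑ i : Fin (m + 1), (if P α i then 1 else 0)
      = (k + 1) * c m k d := by
    rw [Finset.sum_comm]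
    have : ∀ i : Fin (m + 1),
        ∑ α : Equiv.Perm (Fin (m + 1)), (if P α i then 1 else 0)
        = if (i : ℕ) < k + 1 then c m k d else 0 := by
      intro i
      by_cases hi : (i : ℕ) < k + 1
      · rw [if_pos hi]
        have heq : ∀ α : Equiv.Perm (Fin (m + 1)), P α i ↔
            (α i = i ∧ cnt (m + 1) (k + 1) α = d + 1) := by
          intro α; simp only [hP, eq_iff_iff]; tauto
        have : ∑ α : Equiv.Perm (Fin (m + 1)), (if P α i then 1 else 0)
            = (Finset.univ.filter
              (fun α : Equiv.Perm (Fin (m + 1)) =>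
                α i = i ∧ cnt (m + 1) (k + 1) α = d + 1)).card := by
          rw [Finset.card_filter]
          exact Finset.sum_congr rfl (fun α _ => by simp [heq α])
        rw [this, fix_card_eq m (k + 1) (d + 1) i hi, c_fix_zero]
      · rw [if_neg hi]
        have : ∀ α : Equiv.Perm (Fin (m + 1)), (if P α i then 1 else 0) = 0 := by
          intro α; simp [hP]; intro h _ _; omega
        simp [this]
    rw [Finset.sum_congr rfl (fun i _ => this i)]
    rw [← Finset.sum_filter, Finset.sum_const,
      card_lt_fin (m + 1) (k + 1) (Nat.succ_le_succ hk), smul_eq_mul, Nat.mul_comm]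
  rw [← h1, h2]

lemma step (n k d : ℕ) (hd1 : 1 ≤ d) (hd : d ≤ k) (hk : k < n) :
    f n k d = f (n - 1) (k - 1) (d - 1) := by
  obtain ⟨d', rfl⟩ : ∃ d', d = d' + 1 := ⟨d - 1, by omega⟩
  obtain ⟨k', rfl⟩ : ∃ k', k = k' + 1 := ⟨k - 1, by omega⟩
  obtain ⟨m, rfl⟩ : ∃ m, n = m + 2 := ⟨n - 2, by omega⟩
  have hk'm : k' ≤ m := by omega
  have key1 := key (m + 1) k' d' (by omega)
  have key2 := key m k' d' hk'm
  simp only [f, Nat.add_sub_cancel]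
  have hK : ((k' : ℝ) + 1) ≠ 0 := by positivity
  have hD : ((d' : ℝ) + 1) ≠ 0 := by positivity
  have e1 : ((k' : ℝ) + 1) * (c (m + 1) k' d' : ℝ) =
      ((d' : ℝ) + 1) * (c (m + 2) (k' + 1) (d' + 1) : ℝ) := by
    exact_mod_cast congrArg (fun x : ℕ => (x : ℝ)) key1.symm
  have e2 : ((k' : ℝ) + 1) * (c m k' d' : ℝ) =
      ((d' : ℝ) + 1) * (c (m + 1) (k' + 1) (d' + 1) : ℝ) := by
    exact_mod_cast congrArg (fun x : ℕ => (x : ℝ)) key2.symm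
  calc (c (m + 1) (k' + 1) (d' + 1) : ℝ) / (c (m + 2) (k' + 1) (d' + 1) : ℝ)
      = (((d' : ℝ) + 1) * (c (m + 1) (k' + 1) (d' + 1) : ℝ)) /
        (((d' : ℝ) + 1) * (c (m + 2) (k' + 1) (d' + 1) : ℝ)) := by
        rw [mul_div_mul_left _ _ hD]
    _ = (((k' : ℝ) + 1) * (c m k' d' : ℝ)) / (((k' : ℝ) + 1) * (c (m + 1) k' d' : ℝ)) := by
        rw [e1, e2]
    _ = (c m k' d' : ℝ) / (c (m + 1) k' d' : ℝ) := mul_div_mul_left _ _ hK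
    _ = (c (m + 2 - 1 - 1) k' d' : ℝ) / (c (m + 2 - 1) k' d' : ℝ) := by norm_num

theorem stmt10 (n k d a : ℕ) (ha : a ≤ d) (hd : d ≤ k) (hk : k < n) :
    f n k d = f (n - a) (k - a) (d - a) := by
  induction a generalizing n k d with
  | zero => simp
  | succ a ih =>
    have hd1 : 1 ≤ d := by omega
    have hstep := step n k d hd1 hd hk
    have hrec := ih (n - 1) (k - 1) (d - 1) (by omega) (by omega) (by omega)
    rw [hstep, hrec]
    congr 1 <;> omega
end

section
/- For 0 < k < n and n ≠ 3, f(n,k,0) < f(n,k-1,0); that is, the conditional probability that the (k+1)st point is fixed, given no fixed points among the first k points, is strictly decreasing in k. -/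
open Equiv Finset

/-! ### Basic reformulation of `c n k 0` -/

def Pk (n k : ℕ) (α : Perm (Fin n)) : Prop := ∀ i : Fin n, (i : ℕ) < k → α i ≠ i

instance (n k : ℕ) : DecidablePred (Pk n k) := fun _ => by unfold Pk; infer_instance

lemma c_card (n k : ℕ) : c n k 0 = Fintype.card {α : Perm (Fin n) // Pk n k α} := by
  rw [c, Nat.card_eq_fintype_card]
  refine Fintype.card_congr (Equiv.subtypeEquivRight fun α => ?_)
  rw [Finset.card_eq_zero, Finset.filter_eq_empty_iff]
  constructor
  · intro h i hi hfix
    exact h (Finset.mem_univ i) ⟨hi, hfix⟩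
  · rintro h i - ⟨hi, hfix⟩
    exact h i hi hfix

lemma c_zero (n : ℕ) : c n 0 0 = Nat.factorial n := by
  rw [c_card]
  have : Fintype.card {α : Perm (Fin n) // Pk n 0 α} = Fintype.card (Perm (Fin n)) := by
    refine Fintype.card_congr (Equiv.subtypeUnivEquiv fun α => ?_)
    intro i hi; omega
  rw [this, Fintype.card_perm, Fintype.card_fin]

lemma c_diag (n : ℕ) : c n n 0 = numDerangements n := by
  rw [c_card, ← card_derangements_fin_eq_numDerangements]
  refine Fintype.card_congr (Equiv.subtypeEquivRight fun α => ?_)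
  simp only [derangements, Set.mem_setOf_eq, Pk]
  exact ⟨fun h i => h i i.isLt, fun h i _ => h i⟩

/-! ### The recurrence `c (n+1) k 0 = c (n+1) (k+1) 0 + c n k 0` -/

lemma card_fix (n k : ℕ) (hk : k ≤ n) :
    Fintype.card {α : Perm (Fin (n+1)) // Pk (n+1) k α ∧ α ⟨k, by omega⟩ = ⟨k, by omega⟩} =
      Fintype.card {β : Perm (Fin n) // Pk n k β} := by
  refine (Fintype.card_congr ?_).symm
  set p : Fin (n+1) := ⟨k, by omega⟩ with hp
  set e := finSuccAboveEquiv p with he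
  set E := (Equiv.permCongr e).trans (Equiv.Perm.subtypeEquivSubtypePerm (fun x => x ≠ p))
    with hE
  have Eofs : ∀ β : Perm (Fin n), (E β).val = Equiv.Perm.ofSubtype (Equiv.permCongr e β) :=
    fun β => rfl
  have Eval : ∀ (β : Perm (Fin n)) (a : Fin (n+1)) (h : a ≠ p),
      (E β).val a = (e (β (e.symm ⟨a, h⟩)) : {x // x ≠ p}).val := by
    intro β a h
    rw [Eofs, Equiv.Perm.ofSubtype_apply_of_mem (p := fun x => x ≠ p) (e.permCongr β) h,
      Equiv.permCongr_apply]
  have Evale : ∀ (β : Perm (Fin n)) (j : Fin n),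
      (E β).val (e j).val = (e (β j) : {x // x ≠ p}).val := by
    intro β j
    rw [Eval β (e j).val (e j).prop]
    have h2 : e.symm ⟨(e j).val, (e j).prop⟩ = j := by
      rw [Subtype.coe_eta]; exact e.symm_apply_apply j
    rw [h2]
  have succAbove_val_lt : ∀ (j : Fin n), (j : ℕ) < k →
      ((e j : {x // x ≠ p}) : Fin (n+1)).val = (j : ℕ) := by
    intro j hj
    rw [he, finSuccAboveEquiv_apply]
    have : Fin.castSucc j < p := by rw [Fin.lt_def]; simpa [hp] using hj
    simp [Fin.succAbove_of_castSucc_lt p j this]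
  have key : ∀ β : Perm (Fin n), Pk n k β ↔ Pk (n+1) k ((E β).val) := by
    intro β
    constructor
    · intro hβ a ha hfix
      have hane : a ≠ p := by
        intro h; rw [h, hp] at ha; exact lt_irrefl _ ha
      set j := e.symm ⟨a, hane⟩ with hj
      have hEa : (E β).val a = (e (β j) : {x // x ≠ p}).val := Eval β a hane
      have hej : (e j : {x // x ≠ p}) = ⟨a, hane⟩ := e.apply_symm_apply _
      have hβj : β j = j := by
        have : (e (β j) : {x // x ≠ p}) = e j := by
          rw [hej]; exact Subtype.ext (by rw [← hEa, hfix])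
        exact e.injective this
      have hjlt : (j : ℕ) < k := by
        by_contra hge
        push_neg at hge
        have hs : ((e j : {x // x ≠ p}) : Fin (n+1)) = Fin.succ j := by
          rw [he, finSuccAboveEquiv_apply]
          exact Fin.succAbove_of_le_castSucc p j (by rw [Fin.le_def]; simpa [hp] using hge)
        rw [hej] at hs
        have : (a : ℕ) = (j : ℕ) + 1 := by
          have := congrArg Fin.val hs; simpa using this
        omega
      exact hβ j hjlt hβj
    · intro h j hj hfix
      have hval : ((e j : {x // x ≠ p}) : Fin (n+1)).val = (j : ℕ) := succAbove_val_lt j hj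
      have := h (e j).val (by rw [hval]; exact hj)
      apply this
      rw [Evale β j, hfix]
  refine (Equiv.subtypeEquiv E (p := Pk n k)
    (q := fun g : {f : Perm (Fin (n+1)) // ∀ a, ¬ a ≠ p → f a = a} => Pk (n+1) k g.val)
    key).trans ?_
  refine (Equiv.subtypeSubtypeEquivSubtypeInter
    (fun f : Perm (Fin (n+1)) => ∀ a, ¬ a ≠ p → f a = a) (Pk (n+1) k)).trans
    (Equiv.subtypeEquivRight fun α => ?_)
  constructor
  · rintro ⟨h1, h2⟩
    exact ⟨h2, h1 p (by simp)⟩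
  · rintro ⟨h1, h2⟩
    refine ⟨fun a ha => ?_, h1⟩
    rw [not_not.mp ha, h2]

lemma c_rec_card (n k : ℕ) (hk : k ≤ n) :
    Fintype.card {α : Perm (Fin (n+1)) // Pk (n+1) k α} =
      Fintype.card {α : Perm (Fin (n+1)) // Pk (n+1) (k+1) α} +
        Fintype.card {β : Perm (Fin n) // Pk n k β} := by
  classical
  set p : Fin (n+1) := ⟨k, by omega⟩ with hp
  have hsplit := Fintype.card_congr
    (Equiv.sumCompl (fun β : {α : Perm (Fin (n+1)) // Pk (n+1) k α} => β.val p = p))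
  rw [Fintype.card_sum] at hsplit
  have hA : Fintype.card {β : {α : Perm (Fin (n+1)) // Pk (n+1) k α} // β.val p = p} =
      Fintype.card {α : Perm (Fin (n+1)) // Pk (n+1) k α ∧ α p = p} :=
    Fintype.card_congr (Equiv.subtypeSubtypeEquivSubtypeInter (Pk (n+1) k) (fun α => α p = p))
  have hB : Fintype.card {β : {α : Perm (Fin (n+1)) // Pk (n+1) k α} // ¬ β.val p = p} =
      Fintype.card {α : Perm (Fin (n+1)) // Pk (n+1) (k+1) α} := by
    refine Fintype.card_congr ((Equiv.subtypeSubtypeEquivSubtypeInter (Pk (n+1) k)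
      (fun α => ¬ α p = p)).trans (Equiv.subtypeEquivRight fun α => ?_))
    constructor
    · rintro ⟨h1, h2⟩ i hi hfix
      rcases Nat.lt_or_ge (i : ℕ) k with h | h
      · exact h1 i h hfix
      · have : i = p := Fin.ext (by simp only [hp]; omega)
        rw [this] at hfix; exact h2 hfix
    · intro h
      exact ⟨fun i hi => h i (by omega), h p (by simp [hp])⟩
  have hC : Fintype.card {α : Perm (Fin (n+1)) // Pk (n+1) k α ∧ α p = p} =
      Fintype.card {β : Perm (Fin n) // Pk n k β} := card_fix n k hk
  omega

lemma c_rec (n k : ℕ) (hk : k ≤ n) : c (n+1) k 0 = c (n+1) (k+1) 0 + c n k 0 := by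
  rw [c_card, c_card, c_card]
  exact c_rec_card n k hk

/-! ### Closed form as a positive sum of derangement numbers -/

lemma c_S : ∀ (m k : ℕ),
    c (k+m) k 0 = ∑ j ∈ Finset.range (m+1), m.choose j * numDerangements (k+j) := by
  intro m
  induction m with
  | zero => intro k; simpa using c_diag k
  | succ m ih =>
    intro k
    have h1 : c (k+(m+1)) k 0 = c ((k+1)+m) (k+1) 0 + c (k+m) k 0 := by
      have := c_rec (k+m) k (by omega)
      have e1 : k + (m+1) = (k+m) + 1 := by omega
      have e2 : (k+1) + m = (k+m) + 1 := by omega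
      rw [e1, e2, this]
    rw [h1, ih (k+1), ih k]
    have := Finset.sum_choose_succ_mul (R := ℕ) (fun i _ => numDerangements (k+i)) m
    simp only [Nat.cast_id] at this
    rw [this]
    have : ∀ j, k + 1 + j = k + (j+1) := fun j => by omega
    simp only [this]
    omega

lemma D_pos2 : ∀ m, 0 < numDerangements (m+2) := by
  intro m
  induction m with
  | zero => rw [show (2:ℕ) = 0 + 2 from rfl, numDerangements_add_two]; simp [numDerangements]
  | succ m ih =>
    rw [show m+1+2 = m+3 from rfl, show m+3 = (m+1)+2 from rfl, numDerangements_add_two]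
    have : 0 < numDerangements (m+2) := ih
    positivity

lemma D_pos (m : ℕ) (hm : m ≠ 1) : 0 < numDerangements m := by
  match m with
  | 0 => simp [numDerangements]
  | 1 => exact absurd rfl hm
  | m+2 => exact D_pos2 m

lemma D_ge2 (m : ℕ) : 2 ≤ numDerangements (m+3) := by
  rw [show m+3 = (m+1)+2 from rfl, numDerangements_add_two]
  have := D_pos2 m
  nlinarith

lemma D_ge9 (m : ℕ) : 9 ≤ numDerangements (m+4) := by
  rw [show m+4 = (m+2)+2 from rfl, numDerangements_add_two]
  have h1 := D_pos2 m
  have h2 := D_ge2 m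
  nlinarith

lemma D_lcx (m : ℕ) (hm : m ≠ 1) :
    (numDerangements (m+1))^2 < numDerangements m * numDerangements (m+2) := by
  match m with
  | 0 => simp [numDerangements]
  | 1 => exact absurd rfl hm
  | m+2 =>
    have hy := numDerangements_succ (m+2)
    have hz := numDerangements_succ (m+3)
    set x := (numDerangements (m+2) : ℤ) with hx
    set y := (numDerangements (m+3) : ℤ) with hyy
    set z := (numDerangements (m+4) : ℤ) with hzz
    have hxz : x * z - y^2 = x*y + (-1)^(m+2) * (x + y) := by
      have e1 : y = (m+3) * x - (-1)^(m+2) := by exact_mod_cast hy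
      have e2 : z = (m+4) * y - (-1)^(m+3) := by exact_mod_cast hz
      have e3 : ((-1:ℤ))^(m+3) = -((-1)^(m+2)) := by ring
      rw [e2, e3]
      nlinarith [e1, sq_nonneg ((-1:ℤ)^(m+2))]
    have goal : y^2 < x * z := by
      rcases Nat.even_or_odd m with he | ho
      · have hs : ((-1:ℤ))^(m+2) = 1 := (he.add (by decide)).neg_one_pow
        rw [hs] at hxz
        have hx1 : 1 ≤ numDerangements (m+2) := D_pos2 m
        have hx1' : 1 ≤ x := by rw [hx]; exact_mod_cast hx1
        have hy1 : 0 ≤ y := by positivity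
        nlinarith [hxz, mul_nonneg (by linarith : (0:ℤ) ≤ x) hy1]
      · have hs : ((-1:ℤ))^(m+2) = -1 := (ho.add_even (by decide)).neg_one_pow
        rw [hs] at hxz
        have hx2 : 2 ≤ x := by
          have h : 2 ≤ numDerangements (m+2) := by
            obtain ⟨u, rfl⟩ := ho
            exact D_ge2 (2*u)
          rw [hx]; exact_mod_cast h
        have hy9 : 9 ≤ y := by
          have h : 9 ≤ numDerangements (m+3) := by
            obtain ⟨u, rfl⟩ := ho
            exact D_ge9 (2*u)
          rw [hyy]; exact_mod_cast h
        have hp : (1:ℤ) * 8 ≤ (x - 1) * (y - 1) :=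
          mul_le_mul (by linarith) (by linarith) (by linarith) (by linarith)
        nlinarith [hxz]
    show (numDerangements (m+3))^2 < numDerangements (m+2) * numDerangements (m+4)
    rw [hx, hyy, hzz] at goal
    exact_mod_cast goal

/-! ### Sum manipulation -/

lemma sumsplit (t : ℕ) (a : ℕ → ℕ) :
    (∑ j ∈ Finset.range (t+2), (t+1).choose j * a j) =
      ∑ j ∈ Finset.range (t+1), t.choose j * (a j + a (j+1)) := by
  have h := Finset.sum_choose_succ_mul (R := ℕ) (fun i _ => a i) t
  simp only [Nat.cast_id] at h
  rw [h, ← Finset.sum_add_distrib]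
  exact Finset.sum_congr rfl fun j _ => (mul_add _ _ _).symm

lemma sumsplit2 (t : ℕ) (a : ℕ → ℕ) :
    (∑ j ∈ Finset.range (t+3), (t+2).choose j * a j) =
      ∑ j ∈ Finset.range (t+1), t.choose j * (a j + 2 * a (j+1) + a (j+2)) := by
  rw [sumsplit (t+1) a, sumsplit t (fun j => a j + a (j+1))]
  exact Finset.sum_congr rfl fun j _ => by ring

/-! ### Strict log-convexity of `n ↦ c n k 0` for `k ≥ 2`, by Cauchy–Schwarz -/

lemma cs_sum (k t : ℕ) (hk : 2 ≤ k) :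
    (∑ j ∈ Finset.range (t+1), (t.choose j : ℝ) *
        ((numDerangements (k+j) : ℝ) + (numDerangements (k+j+1) : ℝ)))^2
    < (∑ j ∈ Finset.range (t+1), (t.choose j : ℝ) *
        ((numDerangements (k+j) : ℝ) + 2*(numDerangements (k+j+1) : ℝ)
          + (numDerangements (k+j+2) : ℝ)))
      * ∑ j ∈ Finset.range (t+1), (t.choose j : ℝ) * (numDerangements (k+j) : ℝ) := by
  set w : ℕ → ℝ := fun j => (t.choose j : ℝ) with hw
  set x : ℕ → ℝ := fun j => (numDerangements (k+j) : ℝ) with hx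
  set y : ℕ → ℝ := fun j => (numDerangements (k+j+1) : ℝ) with hy
  set z : ℕ → ℝ := fun j => (numDerangements (k+j+2) : ℝ) with hz
  have hwpos : ∀ j ∈ Finset.range (t+1), 0 < w j := by
    intro j hj
    have : j ≤ t := by simpa [Nat.lt_succ_iff] using hj
    have hcp : (0:ℝ) < (t.choose j : ℝ) := by exact_mod_cast Nat.choose_pos this
    exact hcp
  have hxn : ∀ j, 0 ≤ x j := fun j => by positivity
  have hyn : ∀ j, 0 ≤ y j := fun j => by positivity
  have hzn : ∀ j, 0 ≤ z j := fun j => by positivity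
  have hlcx : ∀ j, (y j)^2 < x j * z j := by
    intro j
    have := D_lcx (k+j) (by omega)
    have hcc : ((numDerangements (k+j+1) : ℝ))^2 <
        (numDerangements (k+j) : ℝ) * (numDerangements (k+j+2) : ℝ) := by exact_mod_cast this
    exact hcc
  set r : ℕ → ℝ := fun j => Real.sqrt ((w j * (x j + 2*y j + z j)) * (w j * x j)) with hr
  have step1 : (∑ j ∈ Finset.range (t+1), w j * (x j + y j)) < ∑ j ∈ Finset.range (t+1), r j := by
    refine Finset.sum_lt_sum_of_nonempty (by simp) ?_
    intro j hj
    have hwj := hwpos j hj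
    rw [hr]
    rw [Real.lt_sqrt (by positivity)]
    have hptw : (x j + y j)^2 < x j * (x j + 2*y j + z j) := by nlinarith [hlcx j]
    calc (w j * (x j + y j))^2 = w j^2 * (x j + y j)^2 := by ring
      _ < w j^2 * (x j * (x j + 2*y j + z j)) := by
          exact mul_lt_mul_of_pos_left hptw (by positivity)
      _ = (w j * (x j + 2*y j + z j)) * (w j * x j) := by ring
  have step2 : (∑ j ∈ Finset.range (t+1), r j)^2 ≤
      (∑ j ∈ Finset.range (t+1), w j * (x j + 2*y j + z j)) *
        ∑ j ∈ Finset.range (t+1), w j * x j := by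
    refine Finset.sum_sq_le_sum_mul_sum_of_sq_eq_mul _ ?_ ?_ ?_
    · intro j hj
      have := (hwpos j hj).le
      have := hxn j; have := hyn j; have := hzn j
      positivity
    · intro j hj
      exact mul_nonneg (hwpos j hj).le (hxn j)
    · intro j hj
      refine Real.sq_sqrt ?_
      have := (hwpos j hj).le
      have := hxn j; have := hyn j; have := hzn j
      positivity
  have hnn : 0 ≤ ∑ j ∈ Finset.range (t+1), w j * (x j + y j) := by
    refine Finset.sum_nonneg fun j hj => ?_
    have := (hwpos j hj).le
    have := hxn j; have := hyn j
    positivity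
  calc (∑ j ∈ Finset.range (t+1), w j * (x j + y j))^2
      < (∑ j ∈ Finset.range (t+1), r j)^2 := by
        exact pow_lt_pow_left₀ step1 hnn (by norm_num)
    _ ≤ _ := step2

lemma logcx (k t : ℕ) (hk : 2 ≤ k) :
    ((c (k+t+1) k 0 : ℝ))^2 < (c (k+t+2) k 0 : ℝ) * (c (k+t) k 0 : ℝ) := by
  have h0 : c (k+t) k 0 = ∑ j ∈ Finset.range (t+1),
      t.choose j * numDerangements (k+j) := c_S t k
  have h1 : c (k+t+1) k 0 = ∑ j ∈ Finset.range (t+1),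
      t.choose j * (numDerangements (k+j) + numDerangements (k+j+1)) := by
    have h := c_S (t+1) k
    rw [show k+t+1 = k+(t+1) from rfl, h, sumsplit t (fun j => numDerangements (k+j))]
    rfl
  have h2 : c (k+t+2) k 0 = ∑ j ∈ Finset.range (t+1),
      t.choose j * (numDerangements (k+j) + 2*numDerangements (k+j+1)
        + numDerangements (k+j+2)) := by
    have h := c_S (t+2) k
    rw [show k+t+2 = k+(t+2) from rfl, h, sumsplit2 t (fun j => numDerangements (k+j))]
    rfl
  rw [h0, h1, h2]
  push_cast
  exact cs_sum k t hk

/-! ### Positivity -/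

lemma c_pos (n k : ℕ) (hkn : k ≤ n) (hn : n ≠ 1) : 0 < c n k 0 := by
  obtain ⟨m, rfl⟩ : ∃ m, n = k + m := ⟨n - k, by omega⟩
  rw [c_S m k]
  have hmem : m ∈ Finset.range (m+1) := Finset.self_mem_range_succ m
  have hterm : 0 < m.choose m * numDerangements (k+m) := by
    rw [Nat.choose_self, one_mul]; exact D_pos _ hn
  exact lt_of_lt_of_le hterm (Finset.single_le_sum
    (f := fun j => m.choose j * numDerangements (k+j)) (fun j _ => Nat.zero_le _) hmem)

/-! ### Main theorem -/

theorem stmt19 (n k : ℕ) (hk0 : 0 < k) (hk : k < n) (hn : n ≠ 3) :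
    f n k 0 < f n (k - 1) 0 := by
  obtain ⟨K, rfl⟩ : ∃ K, k = K + 1 := ⟨k-1, by omega⟩
  obtain ⟨N, rfl⟩ : ∃ N, n = N + 2 := ⟨n-2, by omega⟩
  have hKN : K ≤ N := by omega
  have hN1 : N ≠ 1 := by omega
  have r1 : c (N+2) K 0 = c (N+2) (K+1) 0 + c (N+1) K 0 := c_rec (N+1) K (by omega)
  have r2 : c (N+1) K 0 = c (N+1) (K+1) 0 + c N K 0 := c_rec N K hKN
  have hC1 : 0 < c (N+2) (K+1) 0 := c_pos (N+2) (K+1) (by omega) (by omega)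
  have hA : 0 < c (N+2) K 0 := c_pos (N+2) K (by omega) (by omega)
  have key : ((c (N+1) K 0 : ℝ))^2 < (c N K 0 : ℝ) * (c (N+2) K 0 : ℝ) := by
    match K, hKN with
    | 0, _ =>
      rw [c_zero, c_zero, c_zero]
      have h1 : (Nat.factorial (N+1) : ℝ) = (N+1) * Nat.factorial N := by
        exact_mod_cast Nat.factorial_succ N
      have h2 : (Nat.factorial (N+2) : ℝ) = (N+2) * Nat.factorial (N+1) := by
        exact_mod_cast Nat.factorial_succ (N+1)
      have hfp : (0:ℝ) < Nat.factorial N := by exact_mod_cast Nat.factorial_pos N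
      nlinarith [hfp, mul_pos hfp hfp]
    | 1, _ =>
      have hN2 : 2 ≤ N := by omega
      obtain ⟨M, rfl⟩ : ∃ M, N = M + 2 := ⟨N - 2, by omega⟩
      have q1 : Nat.factorial (M+2) = c (M+2) 1 0 + Nat.factorial (M+1) := by
        have h := c_rec (M+1) 0 (Nat.zero_le _)
        rw [c_zero, c_zero] at h; exact h
      have q2 : Nat.factorial (M+3) = c (M+3) 1 0 + Nat.factorial (M+2) := by
        have h := c_rec (M+2) 0 (Nat.zero_le _)
        rw [c_zero, c_zero] at h; exact h
      have q3 : Nat.factorial (M+4) = c (M+4) 1 0 + Nat.factorial (M+3) := by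
        have h := c_rec (M+3) 0 (Nat.zero_le _)
        rw [c_zero, c_zero] at h; exact h
      have hep : (0:ℝ) < (Nat.factorial (M+1) : ℝ) := by
        exact_mod_cast Nat.factorial_pos (M+1)
      have f2 : (Nat.factorial (M+2):ℝ) = ((M:ℝ)+2) * Nat.factorial (M+1) := by
        push_cast [Nat.factorial_succ (M+1)]; ring
      have f3 : (Nat.factorial (M+3):ℝ) = ((M:ℝ)+3) * Nat.factorial (M+2) := by
        push_cast [Nat.factorial_succ (M+2)]; ring
      have f4 : (Nat.factorial (M+4):ℝ) = ((M:ℝ)+4) * Nat.factorial (M+3) := by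
        push_cast [Nat.factorial_succ (M+3)]; ring
      have q1' : (Nat.factorial (M+2) : ℝ) = (c (M+2) 1 0 : ℝ) + Nat.factorial (M+1) := by
        exact_mod_cast q1
      have q2' : (Nat.factorial (M+3) : ℝ) = (c (M+3) 1 0 : ℝ) + Nat.factorial (M+2) := by
        exact_mod_cast q2
      have q3' : (Nat.factorial (M+4) : ℝ) = (c (M+4) 1 0 : ℝ) + Nat.factorial (M+3) := by
        exact_mod_cast q3
      have hb : (c (M+2) 1 0 : ℝ) = ((M:ℝ)+1) * Nat.factorial (M+1) := by
        linear_combination f2 - q1'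
      have ha1 : (c (M+3) 1 0 : ℝ) = ((M:ℝ)+2)^2 * Nat.factorial (M+1) := by
        linear_combination f3 - q2' + ((M:ℝ)+2) * f2
      have hA1 : (c (M+4) 1 0 : ℝ) = ((M:ℝ)+3)^2 * (((M:ℝ)+2) * Nat.factorial (M+1)) := by
        linear_combination f4 - q3' + ((M:ℝ)+3) * f3 + ((M:ℝ)+3)^2 * f2
      rw [ha1, hb, hA1]
      have hM0 : (0:ℝ) ≤ (M:ℝ) := Nat.cast_nonneg M
      have he2 : (0:ℝ) < (Nat.factorial (M+1) : ℝ) * (Nat.factorial (M+1) : ℝ) :=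
        mul_pos hep hep
      have t1 : (0:ℝ) ≤ (M:ℝ) * ((Nat.factorial (M+1) : ℝ) * (Nat.factorial (M+1) : ℝ)) :=
        mul_nonneg hM0 he2.le
      have t2 : (0:ℝ) ≤ (M:ℝ) * ((M:ℝ) * ((Nat.factorial (M+1) : ℝ) * (Nat.factorial (M+1) : ℝ))) :=
        mul_nonneg hM0 t1
      have t3 : (0:ℝ) ≤ (M:ℝ) * ((M:ℝ) * ((M:ℝ) * ((Nat.factorial (M+1) : ℝ) * (Nat.factorial (M+1) : ℝ)))) :=
        mul_nonneg hM0 t2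
      nlinarith [he2, t1, t2, t3]
    | (K2+2), hKN =>
      obtain ⟨t, rfl⟩ : ∃ t, N = K2 + 2 + t := ⟨N - (K2+2), by omega⟩
      have h := logcx (K2+2) t (by omega)
      calc ((c (K2+2+t+1) (K2+2) 0 : ℝ))^2
          < (c (K2+2+t+2) (K2+2) 0 : ℝ) * (c (K2+2+t) (K2+2) 0 : ℝ) := h
        _ = (c (K2+2+t) (K2+2) 0 : ℝ) * (c (K2+2+t+2) (K2+2) 0 : ℝ) := mul_comm _ _
  simp only [f, Nat.add_sub_cancel, show N+2-1 = N+1 from rfl]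
  rw [div_lt_div_iff₀ (by exact_mod_cast hC1) (by exact_mod_cast hA)]
  have r1' : (c (N+2) K 0 : ℝ) = (c (N+2) (K+1) 0 : ℝ) + (c (N+1) K 0 : ℝ) := by
    exact_mod_cast r1
  have r2' : (c (N+1) K 0 : ℝ) = (c (N+1) (K+1) 0 : ℝ) + (c N K 0 : ℝ) := by
    exact_mod_cast r2
  have expand : (c (N+1) (K+1) 0 : ℝ) * (c (N+2) K 0 : ℝ)
      - (c (N+1) K 0 : ℝ) * (c (N+2) (K+1) 0 : ℝ)
      = ((c (N+1) K 0 : ℝ))^2 - (c N K 0 : ℝ) * (c (N+2) K 0 : ℝ) := by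
    linear_combination (c (N+1) K 0 : ℝ) * r1' - (c (N+2) K 0 : ℝ) * r2'
  linarith [key, expand]
end
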